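/- arXiv:1602.05861 — 2 statements merged into one kernel-verified Lean document; each statement's English description precedes it below -/
import Mathlib

section
/- Let G : ℝ^{n-1} → ℝ be a C² function with G(0) = 0 and ∇G(0) = 0, and let M > 0 bound the operator norm of the Hessian of G on the ball of radius 1. Then there is a constant C (depending only on M) such that for all ξ' with |ξ'| ≤ δ^μ ≤ 1/2 and all θ ∈ [0, δ^{ε/2}] with δ ∈ (0,1], μ > 0, ε > 0, one has |(1+θ)G(ξ') − G((1+θ)ξ')| ≤ C δ^{2μ + ε/2}. -/
open InnerProductSpace Metric

private lemma grad_norm_eq {F : Type*} [NormedAddCommGroup F] [InnerProductSpace ℝ F]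
    [CompleteSpace F] (f : F → ℝ) (x : F) : ‖gradient f x‖ = ‖fderiv ℝ f x‖ := by
  simp [gradient]

set_option maxHeartbeats 1000000 in
/-- `|(1+θ)G(ξ') − G((1+θ)ξ')| ≤ C δ^{2μ+ε/2}` for `|ξ'| ≤ δ^μ ≤ 1/2`,
`0 ≤ θ ≤ δ^{ε/2}`, with `C` depending only on the Hessian bound `M`. -/
theorem stmt_2 (n : ℕ) (hn : 2 ≤ n) (M : ℝ) (hM : 0 < M) :
    ∃ C > (0 : ℝ),
      ∀ G : EuclideanSpace ℝ (Fin (n - 1)) → ℝ,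
        ContDiff ℝ 2 G → G 0 = 0 → gradient G 0 = 0 →
        (∀ x : EuclideanSpace ℝ (Fin (n - 1)), ‖x‖ ≤ 1 →
          ‖fderiv ℝ (gradient G) x‖ ≤ M) →
        ∀ (δ μ ε θ : ℝ) (ξ : EuclideanSpace ℝ (Fin (n - 1))),
          0 < δ → δ ≤ 1 → 0 < μ → 0 < ε →
          ‖ξ‖ ≤ δ ^ μ → δ ^ μ ≤ 1 / 2 → 0 ≤ θ → θ ≤ δ ^ (ε / 2) →
          |(1 + θ) * G ξ - G ((1 + θ) • ξ)| ≤ C * δ ^ (2 * μ + ε / 2) := by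
  refine ⟨3 * M, by linarith, ?_⟩
  intro G hG hG0 hgrad0 hHess δ μ ε θ ξ hδ hδ1 hμ hε hξ hhalf hθ0 hθ
  have hGdiff : Differentiable ℝ G := hG.differentiable (by norm_num)
  have hgrad_diff : Differentiable ℝ (gradient G) := by
    have h1 : ContDiff ℝ 1 (fderiv ℝ G) := hG.fderiv_right (by norm_num)
    have heq : gradient G =
        fun x => (toDual ℝ (EuclideanSpace ℝ (Fin (n - 1)))).symm (fderiv ℝ G x) := rfl
    rw [heq]
    exact ((toDual ℝ (EuclideanSpace ℝ (Fin (n - 1)))).symm.toContinuousLinearEquiv.differentiable).comp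
      (h1.differentiable (by norm_num))
  -- Step A : linear bound on the gradient
  have hA : ∀ x : EuclideanSpace ℝ (Fin (n - 1)), ‖x‖ ≤ 1 → ‖gradient G x‖ ≤ M * ‖x‖ := by
    intro x hx
    have hx0 : (0 : EuclideanSpace ℝ (Fin (n - 1))) ∈ closedBall (0 : EuclideanSpace ℝ (Fin (n - 1))) 1 :=
      mem_closedBall_self zero_le_one
    have hxm : x ∈ closedBall (0 : EuclideanSpace ℝ (Fin (n - 1))) 1 := by
      simpa [mem_closedBall, dist_eq_norm] using hx
    have := (convex_closedBall (0 : EuclideanSpace ℝ (Fin (n - 1))) 1).norm_image_sub_le_of_norm_fderiv_le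
      (fun y _ => (hgrad_diff y))
      (fun y hy => hHess y (by simpa [mem_closedBall, dist_eq_norm] using hy))
      hx0 hxm
    simpa [hgrad0] using this
  -- Step B : quadratic bound on G
  have hB : ∀ x : EuclideanSpace ℝ (Fin (n - 1)), ‖x‖ ≤ 1 → |G x| ≤ M * ‖x‖ ^ 2 := by
    intro x hx
    have hx0 : (0 : EuclideanSpace ℝ (Fin (n - 1))) ∈ closedBall (0 : EuclideanSpace ℝ (Fin (n - 1))) ‖x‖ :=
      mem_closedBall_self (norm_nonneg x)
    have hxm : x ∈ closedBall (0 : EuclideanSpace ℝ (Fin (n - 1))) ‖x‖ := by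
      simp [mem_closedBall, dist_eq_norm]
    have h := (convex_closedBall (0 : EuclideanSpace ℝ (Fin (n - 1))) ‖x‖).norm_image_sub_le_of_norm_fderiv_le
      (fun y _ => (hGdiff y))
      (fun y hy => by
        have hy' : ‖y‖ ≤ ‖x‖ := by simpa [mem_closedBall, dist_eq_norm] using hy
        calc ‖fderiv ℝ G y‖ = ‖gradient G y‖ := (grad_norm_eq G y).symm
          _ ≤ M * ‖y‖ := hA y (hy'.trans hx)
          _ ≤ M * ‖x‖ := by nlinarith)
      hx0 hxm
    rw [hG0, sub_zero, sub_zero, Real.norm_eq_abs] at h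
    calc |G x| ≤ M * ‖x‖ * ‖x‖ := h
      _ = M * ‖x‖ ^ 2 := by ring
  set A := δ ^ μ with hAdef
  set B := δ ^ (ε / 2) with hBdef
  have hApos : 0 < A := Real.rpow_pos_of_pos hδ μ
  have hB1 : B ≤ 1 := Real.rpow_le_one (le_of_lt hδ) hδ1 (by linarith)
  have hBpos : 0 < B := Real.rpow_pos_of_pos hδ _
  have hξ0 : 0 ≤ ‖ξ‖ := norm_nonneg ξ
  have hθ1 : θ ≤ 1 := hθ.trans hB1
  have hA1 : A ≤ 1 := by linarith
  have hnorm_smul : ‖(1 + θ) • ξ‖ = (1 + θ) * ‖ξ‖ := by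
    rw [norm_smul, Real.norm_eq_abs, abs_of_pos (by linarith)]
  have hsm1 : ‖(1 + θ) • ξ‖ ≤ 2 * A := by
    rw [hnorm_smul]; nlinarith [mul_le_mul hθ1 hξ hξ0 zero_le_one]
  have h2A1 : 2 * A ≤ 1 := by linarith
  -- Step C : bound on the increment
  have hC : |G ((1 + θ) • ξ) - G ξ| ≤ M * (2 * A) * (θ * ‖ξ‖) := by
    have hm1 : ξ ∈ closedBall (0 : EuclideanSpace ℝ (Fin (n - 1))) (2 * A) := by
      simp only [mem_closedBall, dist_eq_norm, sub_zero]; linarith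
    have hm2 : (1 + θ) • ξ ∈ closedBall (0 : EuclideanSpace ℝ (Fin (n - 1))) (2 * A) := by
      simpa [mem_closedBall, dist_eq_norm] using hsm1
    have h := (convex_closedBall (0 : EuclideanSpace ℝ (Fin (n - 1))) (2 * A)).norm_image_sub_le_of_norm_fderiv_le
      (fun y _ => (hGdiff y))
      (fun y hy => by
        have hy' : ‖y‖ ≤ 2 * A := by simpa [mem_closedBall, dist_eq_norm] using hy
        calc ‖fderiv ℝ G y‖ = ‖gradient G y‖ := (grad_norm_eq G y).symm
          _ ≤ M * ‖y‖ := hA y (hy'.trans h2A1)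
          _ ≤ M * (2 * A) := by nlinarith)
      hm1 hm2
    have heq : ‖(1 + θ) • ξ - ξ‖ = θ * ‖ξ‖ := by
      have h2 : (1 + θ) • ξ - ξ = θ • ξ := by
        rw [add_smul, one_smul]; abel
      rw [h2, norm_smul, Real.norm_eq_abs, abs_of_nonneg hθ0]
    rw [Real.norm_eq_abs, heq] at h
    exact h
  -- |G ξ| ≤ M * A ^ 2
  have hGξ : |G ξ| ≤ M * A ^ 2 := by
    have h := hB ξ (hξ.trans hA1)
    have h2 : ‖ξ‖ ^ 2 ≤ A ^ 2 := pow_le_pow_left₀ hξ0 hξ 2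
    nlinarith
  -- combine
  have key : |(1 + θ) * G ξ - G ((1 + θ) • ξ)| ≤ 3 * M * (A * A * B) := by
    have hsplit : (1 + θ) * G ξ - G ((1 + θ) • ξ)
        = θ * G ξ - (G ((1 + θ) • ξ) - G ξ) := by ring
    rw [hsplit]
    have habs : |θ * G ξ - (G ((1 + θ) • ξ) - G ξ)|
        ≤ θ * |G ξ| + |G ((1 + θ) • ξ) - G ξ| := by
      calc _ ≤ |θ * G ξ| + |G ((1 + θ) • ξ) - G ξ| := abs_sub _ _
        _ = θ * |G ξ| + |G ((1 + θ) • ξ) - G ξ| := by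
            rw [abs_mul, abs_of_nonneg hθ0]
    have h1 : θ * |G ξ| ≤ M * (A * A * B) := by nlinarith [abs_nonneg (G ξ)]
    have h2 : |G ((1 + θ) • ξ) - G ξ| ≤ 2 * M * (A * A * B) := by
      have hmul : θ * ‖ξ‖ ≤ B * A := mul_le_mul hθ hξ hξ0 hBpos.le
      have h3 := mul_le_mul_of_nonneg_left hmul (show (0:ℝ) ≤ M * (2 * A) by positivity)
      calc |G ((1 + θ) • ξ) - G ξ| ≤ M * (2 * A) * (θ * ‖ξ‖) := hC
        _ ≤ M * (2 * A) * (B * A) := h3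
        _ = 2 * M * (A * A * B) := by ring
    linarith
  have hpow : δ ^ (2 * μ + ε / 2) = A * A * B := by
    have h2μ : δ ^ (2 * μ) = A * A := by rw [two_mul, Real.rpow_add hδ]
    rw [Real.rpow_add hδ, h2μ]
  rw [hpow]
  exact key
end

section
/- Convex combination parametrization of the truncated cone piece: let P₀(ξ') = (ξ', G₀(ξ'), 0, …, 0) ∈ ℝ^{n+k} and P_j(ξ') = (h_j(ξ'), G_j(h_j(ξ')), e_j) ∈ ℝ^{n+k} for j = 1, …, k, where e_j ∈ ℝ^k is the j-th standard basis vector, G₀, G_j, h_j are as in the k-cone setup with the estimates |h_j(ξ') − ξ'| ≤ L|ξ'|, |G₀(ξ')| ≤ M|ξ'|², |G_j(h_j(ξ'))| ≤ M'|ξ'|², and G₀ having M-bounded Hessian with ∇G₀(0) = 0. Then every point of the set {(1 − Σ_j θ_j) P₀(ξ') + Σ_j θ_j P_j(ξ') : |ξ'| ≤ δ^μ, 0 ≤ θ_j ≤ δ^{ε/2}} is within distance C δ^{2μ + ε/2} of the cylinder {(η', G₀(η'), t) : |η'| ≤ 2δ^μ, t ∈ [0, δ^{ε/2}]^k}, where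 C depends only on M, M', L, k. -/
open InnerProductSpace Metric

lemma aux_grad_bound {E : Type*} [NormedAddCommGroup E] [InnerProductSpace ℝ E] [CompleteSpace E]
    (G₀ : E → ℝ) (M : ℝ) (hG₀ : ContDiff ℝ 2 G₀) (h0 : gradient G₀ 0 = 0)
    (hHess : ∀ x, ‖x‖ ≤ 1 → ‖fderiv ℝ (gradient G₀) x‖ ≤ M) :
    ∀ y : E, ‖y‖ ≤ 1 → ‖gradient G₀ y‖ ≤ M * ‖y‖ := by
  have h1 : Differentiable ℝ (fderiv ℝ G₀) :=
    (hG₀.fderiv_right (m := 1) (by norm_num)).differentiable one_ne_zero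
  set e : StrongDual ℝ E ≃ₗᵢ⋆[ℝ] E := (InnerProductSpace.toDual ℝ E).symm with he
  have hsm : ∀ (c : ℝ) (z : StrongDual ℝ E), e (c • z) = c • e z := by
    intro c z
    simp [LinearIsometryEquiv.map_smulₛₗ, starRingEnd_apply]
  let e'' : (E →L[ℝ] ℝ) →L[ℝ] E :=
    LinearMap.mkContinuous
      { toFun := fun z => e z
        map_add' := fun a b => by simp
        map_smul' := fun c z => by simpa using hsm c z } 1
      (fun z => by simp)
  have hcomp : gradient G₀ = fun x => e'' (fderiv ℝ G₀ x) := rfl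
  have hd : Differentiable ℝ (gradient G₀) := by
    rw [hcomp]; exact e''.differentiable.comp h1
  intro y hy
  have := Convex.norm_image_sub_le_of_norm_fderiv_le (f := gradient G₀)
    (s := closedBall (0 : E) 1)
    (fun x _ => hd x) (fun x hx => hHess x (by simpa [mem_closedBall, dist_eq_norm] using hx))
    (convex_closedBall _ _) (mem_closedBall_self (by norm_num))
    (by simpa [mem_closedBall, dist_eq_norm] using hy)
  simpa [h0] using this

set_option maxHeartbeats 1000000 in
/-- every point of the truncated `k`-cone piece
`{(1−Σθ_j)P₀(ξ') + Σθ_j P_j(ξ')}` lies within `C δ^{2μ+ε/2}` of the cylinder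
`{(η', G₀(η'), t) : |η'| ≤ 2δ^μ, t ∈ [0, δ^{ε/2}]^k}`. -/
theorem stmt_18 (n k : ℕ) (hn : 2 ≤ n) (hk : 1 ≤ k)
    (M M' L : ℝ) (hM : 0 < M) (hM' : 0 < M') (hL : 0 < L) :
    ∃ C > (0 : ℝ),
      ∀ (G₀ : EuclideanSpace ℝ (Fin (n - 1)) → ℝ)
        (G : Fin k → EuclideanSpace ℝ (Fin (n - 1)) → ℝ)
        (h : Fin k → EuclideanSpace ℝ (Fin (n - 1)) → EuclideanSpace ℝ (Fin (n - 1))),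
        ContDiff ℝ 2 G₀ → gradient G₀ 0 = 0 → G₀ 0 = 0 →
        (∀ x : EuclideanSpace ℝ (Fin (n - 1)), ‖x‖ ≤ 1 →
          ‖fderiv ℝ (gradient G₀) x‖ ≤ M) →
        (∀ j, ∀ ξ : EuclideanSpace ℝ (Fin (n - 1)), ‖ξ‖ ≤ 1 →
          ‖h j ξ - ξ‖ ≤ L * ‖ξ‖) →
        (∀ ξ : EuclideanSpace ℝ (Fin (n - 1)), ‖ξ‖ ≤ 1 → |G₀ ξ| ≤ M * ‖ξ‖ ^ 2) →
        (∀ j, ∀ ξ : EuclideanSpace ℝ (Fin (n - 1)), ‖ξ‖ ≤ 1 →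
          |G j (h j ξ)| ≤ M' * ‖ξ‖ ^ 2) →
        ∀ (δ μ ε : ℝ), 0 < δ → δ ≤ 1 → 0 < μ → 0 < ε →
          δ ^ μ ≤ 1 / 2 → (k : ℝ) * L * δ ^ (ε / 2) ≤ 1 →
        ∀ (ξ : EuclideanSpace ℝ (Fin (n - 1))) (θ : Fin k → ℝ),
          ‖ξ‖ ≤ δ ^ μ → (∀ j, 0 ≤ θ j ∧ θ j ≤ δ ^ (ε / 2)) →
          -- the cone point, with `P₀(ξ) = (ξ, G₀(ξ), 0)` and
          -- `P_j(ξ) = (h_j(ξ), G_j(h_j(ξ)), e_j)` in `ℝ^{n-1} × ℝ × ℝ^k`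
          ∃ (η : EuclideanSpace ℝ (Fin (n - 1))) (t : Fin k → ℝ),
            ‖η‖ ≤ 2 * δ ^ μ ∧ (∀ j, t j ∈ Set.Icc (0 : ℝ) (δ ^ (ε / 2))) ∧
            dist
              ((1 - ∑ j, θ j) • ((ξ, G₀ ξ, 0) :
                  EuclideanSpace ℝ (Fin (n - 1)) × ℝ × EuclideanSpace ℝ (Fin k)) +
                ∑ j, θ j • ((h j ξ, G j (h j ξ), EuclideanSpace.single j 1) :
                  EuclideanSpace ℝ (Fin (n - 1)) × ℝ × EuclideanSpace ℝ (Fin k)))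
              ((η, G₀ η, (WithLp.toLp 2 t : EuclideanSpace ℝ (Fin k)))) ≤ C * δ ^ (2 * μ + ε / 2) := by
  refine ⟨2*M*k*L + k*(M+M') + 1, by positivity, ?_⟩
  intro G₀ G h hG₀ hg0 hG00 hHess hh hG0b hGb δ μ ε hδ hδ1 hμ hε hhalf hkL ξ θ hξ hθ
  have hδμ : (0:ℝ) < δ ^ μ := Real.rpow_pos_of_pos hδ _
  have hδε : (0:ℝ) < δ ^ (ε/2) := Real.rpow_pos_of_pos hδ _
  have hξ1 : ‖ξ‖ ≤ 1 := hξ.trans (hhalf.trans (by norm_num : (1:ℝ)/2 ≤ 1))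
  set η : EuclideanSpace ℝ (Fin (n - 1)) := (1 - ∑ j, θ j) • ξ + ∑ j, θ j • h j ξ with hη
  have hηsub : η - ξ = ∑ j, θ j • (h j ξ - ξ) := by
    simp only [hη, smul_sub, Finset.sum_sub_distrib, sub_smul, one_smul, Finset.sum_smul]
    abel
  have hηξ : ‖η - ξ‖ ≤ (k * L * δ ^ (ε/2)) * δ ^ μ := by
    rw [hηsub]
    calc ‖∑ j, θ j • (h j ξ - ξ)‖ ≤ ∑ j, ‖θ j • (h j ξ - ξ)‖ := norm_sum_le _ _
      _ ≤ ∑ _j : Fin k, δ ^ (ε/2) * (L * δ ^ μ) := by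
          refine Finset.sum_le_sum fun j _ => ?_
          rw [norm_smul, Real.norm_eq_abs, abs_of_nonneg (hθ j).1]
          exact mul_le_mul (hθ j).2 ((hh j ξ hξ1).trans
            (mul_le_mul_of_nonneg_left hξ hL.le)) (norm_nonneg _) hδε.le
      _ = (k * L * δ ^ (ε/2)) * δ ^ μ := by
          rw [Finset.sum_const, Finset.card_univ, Fintype.card_fin, nsmul_eq_mul]; ring
  have hη2 : ‖η‖ ≤ 2 * δ ^ μ := by
    calc ‖η‖ = ‖ξ + (η - ξ)‖ := by rw [add_sub_cancel]
      _ ≤ ‖ξ‖ + ‖η - ξ‖ := norm_add_le _ _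
      _ ≤ δ ^ μ + 1 * δ ^ μ := add_le_add hξ (hηξ.trans (mul_le_mul_of_nonneg_right hkL hδμ.le))
      _ = 2 * δ ^ μ := by ring
  refine ⟨η, θ, hη2, fun j => ⟨(hθ j).1, (hθ j).2⟩, ?_⟩
  set B : ℝ := (1 - ∑ j, θ j) * G₀ ξ + ∑ j, θ j * G j (h j ξ) with hB
  have hpt : ((1 - ∑ j, θ j) • ((ξ, G₀ ξ, 0) : EuclideanSpace ℝ (Fin (n - 1)) × ℝ × EuclideanSpace ℝ (Fin k)) +
      ∑ j, θ j • ((h j ξ, G j (h j ξ), EuclideanSpace.single j 1) :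
        EuclideanSpace ℝ (Fin (n - 1)) × ℝ × EuclideanSpace ℝ (Fin k)))
      = (η, B, (WithLp.toLp 2 θ : EuclideanSpace ℝ (Fin k))) := by
    refine Prod.ext ?_ (Prod.ext ?_ ?_)
    · simp [hη, Prod.fst_sum]
    · simp [hB, Prod.snd_sum, Prod.fst_sum]
    · have h22 : ((1 - ∑ j, θ j) • ((ξ, G₀ ξ, 0) :
          EuclideanSpace ℝ (Fin (n - 1)) × ℝ × EuclideanSpace ℝ (Fin k)) +
          ∑ j, θ j • ((h j ξ, G j (h j ξ), EuclideanSpace.single j 1) :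
            EuclideanSpace ℝ (Fin (n - 1)) × ℝ × EuclideanSpace ℝ (Fin k))).2.2
          = ∑ j, θ j • (EuclideanSpace.single j (1:ℝ)) := by
        simp [Prod.snd_sum]
      rw [h22]
      ext i
      simp [EuclideanSpace.single_apply, Pi.single_apply]
  rw [hpt]
  have hdist : dist ((η, B, (WithLp.toLp 2 θ : EuclideanSpace ℝ (Fin k))) : EuclideanSpace ℝ (Fin (n - 1)) × ℝ × EuclideanSpace ℝ (Fin k))
      ((η, G₀ η, (WithLp.toLp 2 θ : EuclideanSpace ℝ (Fin k)))) = |B - G₀ η| := by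
    simp [Prod.dist_eq, Real.dist_eq, abs_nonneg]
  rw [hdist]
  -- gradient bound
  have hgrad := aux_grad_bound G₀ M hG₀ hg0 hHess
  have hball : η ∈ Metric.closedBall (0 : EuclideanSpace ℝ (Fin (n - 1))) (2 * δ ^ μ) := by
    simpa [Metric.mem_closedBall, dist_eq_norm] using hη2
  have hξball : ξ ∈ Metric.closedBall (0 : EuclideanSpace ℝ (Fin (n - 1))) (2 * δ ^ μ) := by
    simp only [Metric.mem_closedBall, dist_eq_norm, sub_zero]
    calc ‖ξ‖ ≤ δ ^ μ := hξ
      _ ≤ 2 * δ ^ μ := by nlinarith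
  have hdiffG : Differentiable ℝ G₀ := hG₀.differentiable (by norm_num)
  have hfd : ∀ x : EuclideanSpace ℝ (Fin (n - 1)), ‖fderiv ℝ G₀ x‖ = ‖gradient G₀ x‖ := by
    intro x
    rw [gradient, LinearIsometryEquiv.norm_map]
  have key1 : |G₀ η - G₀ ξ| ≤ (M * (2 * δ ^ μ)) * ‖η - ξ‖ := by
    have := Convex.norm_image_sub_le_of_norm_fderiv_le (f := G₀)
      (s := Metric.closedBall (0 : EuclideanSpace ℝ (Fin (n - 1))) (2 * δ ^ μ))
      (fun x _ => hdiffG x)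
      (fun x hx => by
        rw [hfd]
        have hx' : ‖x‖ ≤ 2 * δ ^ μ := by
          simpa [Metric.mem_closedBall, dist_eq_norm] using hx
        have hx1 : ‖x‖ ≤ 1 := hx'.trans (by nlinarith)
        exact (hgrad x hx1).trans (mul_le_mul_of_nonneg_left hx' hM.le))
      (convex_closedBall _ _) hξball hball
    simpa [Real.norm_eq_abs] using this
  have key2 : ∀ j : Fin k, |G j (h j ξ) - G₀ ξ| ≤ (M + M') * (δ ^ μ)^2 := by
    intro j
    calc |G j (h j ξ) - G₀ ξ| ≤ |G j (h j ξ)| + |G₀ ξ| := abs_sub _ _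
      _ ≤ M' * ‖ξ‖^2 + M * ‖ξ‖^2 := add_le_add (hGb j ξ hξ1) (hG0b ξ hξ1)
      _ ≤ M' * (δ ^ μ)^2 + M * (δ ^ μ)^2 := by
          have : ‖ξ‖^2 ≤ (δ ^ μ)^2 := pow_le_pow_left₀ (norm_nonneg _) hξ 2
          nlinarith
      _ = (M + M') * (δ ^ μ)^2 := by ring
  have hBsub : B - G₀ η = (G₀ ξ - G₀ η) + ∑ j, θ j * (G j (h j ξ) - G₀ ξ) := by
    simp only [hB, Finset.mul_sum, mul_sub, Finset.sum_sub_distrib, ← Finset.sum_mul]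
    ring
  have hpow : δ ^ (2 * μ + ε / 2) = δ ^ μ * δ ^ μ * δ ^ (ε/2) := by
    rw [show 2 * μ + ε / 2 = μ + (μ + ε/2) by ring, Real.rpow_add hδ, Real.rpow_add hδ]
    ring
  have e1 : |G₀ ξ - G₀ η| ≤ (2*M*k*L) * (δ ^ μ * δ ^ μ * δ ^ (ε/2)) := by
    rw [abs_sub_comm]
    calc |G₀ η - G₀ ξ| ≤ (M * (2 * δ ^ μ)) * ‖η - ξ‖ := key1
      _ ≤ (M * (2 * δ ^ μ)) * ((k * L * δ ^ (ε/2)) * δ ^ μ) := by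
          refine mul_le_mul_of_nonneg_left hηξ (by positivity)
      _ = (2*M*k*L) * (δ ^ μ * δ ^ μ * δ ^ (ε/2)) := by ring
  have e2 : |∑ j, θ j * (G j (h j ξ) - G₀ ξ)| ≤ (k*(M+M')) * (δ ^ μ * δ ^ μ * δ ^ (ε/2)) := by
    calc |∑ j, θ j * (G j (h j ξ) - G₀ ξ)| ≤ ∑ j, |θ j * (G j (h j ξ) - G₀ ξ)| :=
          Finset.abs_sum_le_sum_abs _ _
      _ ≤ ∑ _j : Fin k, δ ^ (ε/2) * ((M + M') * (δ ^ μ)^2) := by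
          refine Finset.sum_le_sum fun j _ => ?_
          rw [abs_mul, abs_of_nonneg (hθ j).1]
          exact mul_le_mul (hθ j).2 (key2 j) (abs_nonneg _) hδε.le
      _ = (k*(M+M')) * (δ ^ μ * δ ^ μ * δ ^ (ε/2)) := by
          rw [Finset.sum_const, Finset.card_univ, Fintype.card_fin, nsmul_eq_mul]; ring
  calc |B - G₀ η| ≤ |G₀ ξ - G₀ η| + |∑ j, θ j * (G j (h j ξ) - G₀ ξ)| := by
        rw [hBsub]; exact abs_add_le _ _
    _ ≤ (2*M*k*L) * (δ ^ μ * δ ^ μ * δ ^ (ε/2)) + (k*(M+M')) * (δ ^ μ * δ ^ μ * δ ^ (ε/2)) :=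
        add_le_add e1 e2
    _ ≤ (2*M*↑k*L + ↑k*(M+M') + 1) * δ ^ (2 * μ + ε / 2) := by
        rw [hpow]; nlinarith [hδμ.le, hδε.le, mul_pos (mul_pos hδμ hδμ) hδε]
end
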